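/- arXiv:1704.06715 — 2 statements merged into one kernel-verified Lean document; each statement's English description precedes it below -/
import Mathlib

section
/- The antipode S of the Hopf algebra QSym of quasisymmetric functions acts on the monomial quasisymmetric function M_F associated to a flag F of subsets of [n] by S(M_F) = (−1)^{|F|+1} Σ_{G ⪯ F^{op}} M_G, where the sum is over all flags G refined by the opposite flag F^{op}. Equivalently, for a composition α of length k(α), S(M_α) = (−1)^{k(α)+1} Σ_{β} M_β, the sum over all compositions β that coarsen the reverse composition rev(α). -/
open scoped Classical Pointwise BigOperators


/-- The dot product pairing on `ℝⁿ`. -/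
def dotp {n : ℕ} (ω x : Fin n → ℝ) : ℝ := ∑ i, ω i * x i

/-- The set of points of `Q` on which the linear functional `⟨ω, ·⟩` attains its maximum. -/
def argmaxSet {n : ℕ} (Q : Set (Fin n → ℝ)) (ω : Fin n → ℝ) : Set (Fin n → ℝ) :=
  {x | x ∈ Q ∧ ∀ y ∈ Q, dotp ω y ≤ dotp ω x}

/-- `G` is a face of `Q` : it is the argmax set of some linear functional. -/
def IsFace {n : ℕ} (Q G : Set (Fin n → ℝ)) : Prop := ∃ ω : Fin n → ℝ, G = argmaxSet Q ω

/-- The dimension of a convex body: the rank of its direction vector space. -/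
noncomputable def pdim {n : ℕ} (s : Set (Fin n → ℝ)) : ℕ := Module.finrank ℝ (vectorSpan ℝ s)

/-- `Q` is a (nonempty) convex polytope. -/
def IsPolytope {n : ℕ} (Q : Set (Fin n → ℝ)) : Prop :=
  ∃ V : Finset (Fin n → ℝ), V.Nonempty ∧ Q = convexHull ℝ (V : Set (Fin n → ℝ))

/-- A flag `∅ ⊂ F₁ ⊂ ⋯ ⊂ F_k ⊂ [n]` of subsets of `[n]`, recorded by its set
`C = {F₁,…,F_k}` of proper nonempty intermediate subsets, which form a chain. -/
def IsFlag (n : ℕ) (C : Finset (Finset (Fin n))) : Prop :=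
  (∀ A ∈ C, A.Nonempty ∧ A ≠ Finset.univ) ∧ (∀ A ∈ C, ∀ B ∈ C, A ⊆ B ∨ B ⊆ A)

/-- The level of an element: the number of members of the chain not containing it.  Elements of
`F_i ∖ F_{i-1}` have level `i - 1`-ish: level `0` on the smallest set, etc. -/
def lv {n : ℕ} (C : Finset (Finset (Fin n))) (p : Fin n) : ℕ := (C.filter (fun A => p ∉ A)).card

/-- The `j`-th member `F_j` of the full chain `∅ = F₀ ⊂ F₁ ⊂ ⋯ ⊂ F_{k+1} = [n]` of the flag. -/
def fullChain {n : ℕ} (C : Finset (Finset (Fin n))) (j : ℕ) : Finset (Fin n) :=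
  Finset.univ.filter (fun p => lv C p < j)

/-- The type of a flag: the composition `(|F₁|-|F₀|, …, |F_{k+1}|-|F_k|)` of `n`. -/
def flagType {n : ℕ} (C : Finset (Finset (Fin n))) : List ℕ :=
  (List.range (C.card + 1)).map (fun j => (fullChain C (j + 1)).card - (fullChain C j).card)

/-- The relative interior of the braid cone of a flag: coordinates are equal inside each block
`F_{i+1} ∖ F_i` and strictly increase from earlier blocks to later blocks. -/
def relintBraidCone {n : ℕ} (C : Finset (Finset (Fin n))) : Set (Fin n → ℝ) :=
  {x | ∀ p q : Fin n, ((∀ A ∈ C, (p ∈ A ↔ q ∈ A)) → x p = x q) ∧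
      ((∃ A ∈ C, p ∈ A ∧ q ∉ A) → x p < x q)}

/-- Homogeneous quasisymmetric functions in the monomial basis: finitely supported
coefficient functions on compositions (lists of positive integers). -/
abbrev QS : Type := (List ℕ) →₀ ℚ

/-- The monomial quasisymmetric function `M_α`. -/
noncomputable def Mc (l : List ℕ) : QS := Finsupp.single l 1

/-- The principal specialization at `-1`:  `ps(M_α)(-1) = (-1)^{k(α)}`, extended linearly. -/
noncomputable def psNeg (f : QS) : ℚ := f.sum (fun l c => c * (-1) ^ l.length)

/-- The `f`-polynomial of a polytope `P ⊆ ℝⁿ`, evaluated at `t`. -/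
noncomputable def fPoly {n : ℕ} (P : Set (Fin n → ℝ)) (t : ℚ) : ℚ :=
  ∑ i ∈ Finset.range n, ((Set.ncard {G : Set (Fin n → ℝ) | IsFace P G ∧ pdim G = i} : ℚ) * t ^ i)

/-- The weighted quasisymmetric enumerator `F_q(Q) = Σ_F q^{rk(F)} M_{type(F)}`, where the rank
statistic `rk` on flags is given as an argument. -/
noncomputable def FqEnum (n : ℕ) (rk : Finset (Finset (Fin n)) → ℕ) (q : ℚ) : QS :=
  ∑ C : Finset (Finset (Fin n)), if IsFlag n C then q ^ (rk C) • Mc (flagType C) else 0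

/-- The multiset of overlapping (quasi-)shuffles of two compositions. -/
def qshuffle : List ℕ → List ℕ → Multiset (List ℕ)
  | [], l => {l}
  | a :: as, [] => {a :: as}
  | a :: as, b :: bs =>
      ((qshuffle as (b :: bs)).map (fun t => a :: t)) +
      ((qshuffle (a :: as) bs).map (fun t => b :: t)) +
      ((qshuffle as bs).map (fun t => (a + b) :: t))
termination_by l₁ l₂ => l₁.length + l₂.length
decreasing_by all_goals (simp only [List.length_cons]; omega)

/-- The product of quasisymmetric functions in the monomial basis: the bilinear extension
of the quasi-shuffle product `M_α · M_β = Σ_{γ ∈ qshuffle α β} M_γ`. -/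
noncomputable def mulQS (f g : QS) : QS :=
  f.sum fun a ca => g.sum fun b cb => (ca * cb) • ((qshuffle a b).map (fun l => Mc l)).sum

/-- `S` is the antipode of the Hopf algebra `QSym`: it is linear and satisfies the antipode
identity `Σ_{βγ = α} S(M_β)·M_γ = (unit ∘ counit)(M_α)` for the deconcatenation coproduct
`Δ(M_α) = Σ_{βγ=α} M_β ⊗ M_γ` and the quasi-shuffle product. -/
def IsAntipode (S : QS →ₗ[ℚ] QS) : Prop :=
  ∀ l : List ℕ,
    (∑ i ∈ Finset.range (l.length + 1), mulQS (S (Mc (l.take i))) (Mc (l.drop i)))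
      = if l = [] then Mc [] else 0

/-- The opposite flag `F^{op} : ∅ ⊂ [n]∖F_k ⊂ ⋯ ⊂ [n]∖F₁ ⊂ [n]`. -/
def FopFlag {n : ℕ} (C : Finset (Finset (Fin n))) : Finset (Finset (Fin n)) :=
  C.image (fun A => Finset.univ \ A)


/-! ### Auxiliary development -/

section AuxCoars

/-- The multiset of coarsenings of a composition. -/
def coars : List ℕ → Multiset (List ℕ)
  | [] => {[]}
  | [a] => {[a]}
  | a :: b :: t => ((coars (b :: t)).map (a :: ·)) + coars ((a + b) :: t)

/-- Add `a` to the first entry of a list. -/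
def addFirst (a : ℕ) : List ℕ → List ℕ
  | [] => []
  | h :: t => (a + h) :: t

lemma coars_addFirst (a b : ℕ) (t : List ℕ) :
    coars ((a + b) :: t) = (coars (b :: t)).map (addFirst a) := by
  induction t generalizing b with
  | nil => simp [coars, addFirst]
  | cons c t ih =>
      rw [coars, coars, Multiset.map_add, Multiset.map_map,
        show (addFirst a ∘ (b :: ·)) = ((a + b) :: ·) from funext fun x => rfl,
        show a + b + c = a + (b + c) from by omega, ih]

lemma coars_ne_nil (a : ℕ) (t : List ℕ) : ∀ δ ∈ coars (a :: t), δ ≠ [] := by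
  induction t generalizing a with
  | nil =>
      intro δ hδ
      simp only [coars, Multiset.mem_singleton] at hδ
      simp [hδ]
  | cons b t ih =>
      intro δ hδ
      rw [coars] at hδ
      rcases Multiset.mem_add.1 hδ with h | h
      · obtain ⟨x, _, rfl⟩ := Multiset.mem_map.1 h
        simp
      · exact ih (a + b) δ h

end AuxCoars

section AuxMul

/-- `hq δ s` : quasi-shuffles of `δ` with `s` in which the head of `δ` comes first. -/
def hq : List ℕ → List ℕ → Multiset (List ℕ)
  | [], _ => 0
  | h :: t, s => (qshuffle t s).map (h :: ·)

lemma qshuffle_nil_right (a : List ℕ) : qshuffle a [] = {a} := by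
  cases a with
  | nil => simp [qshuffle]
  | cons x xs => simp [qshuffle]

lemma mulQS_Mc_Mc (a b : List ℕ) : mulQS (Mc a) (Mc b) = ((qshuffle a b).map Mc).sum := by
  unfold mulQS Mc
  rw [Finsupp.sum_single_index, Finsupp.sum_single_index] <;> simp

lemma mulQS_zero_left (g : QS) : mulQS 0 g = 0 := by
  simp [mulQS]

lemma mulQS_add_left (f g h : QS) : mulQS (f + g) h = mulQS f h + mulQS g h := by
  unfold mulQS
  apply Finsupp.sum_add_index'
  · intro a
    simp [Finsupp.sum]
  · intro a c₁ c₂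
    rw [← Finsupp.sum_add]
    apply Finsupp.sum_congr
    intro b _
    rw [add_mul, add_smul]

lemma mulQS_smul_left (c : ℚ) (f g : QS) : mulQS (c • f) g = c • mulQS f g := by
  unfold mulQS
  rw [Finsupp.sum_smul_index (by intro a; simp [Finsupp.sum]), Finsupp.smul_sum]
  apply Finsupp.sum_congr
  intro a _
  rw [Finsupp.smul_sum]
  apply Finsupp.sum_congr
  intro b _
  rw [mul_assoc, mul_smul]

lemma mulQS_Mc_nil_right (f : QS) : mulQS f (Mc []) = f := by
  have key : ∀ (a : List ℕ) (ca : ℚ),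
      ((Mc []).sum fun b cb => (ca * cb) • ((qshuffle a b).map Mc).sum) = Finsupp.single a ca := by
    intro a ca
    rw [Mc, Finsupp.sum_single_index (by simp), qshuffle_nil_right]
    simp [Mc, Finsupp.smul_single]
  unfold mulQS
  rw [Finsupp.sum_congr (fun a _ => key a (f a))]
  exact Finsupp.sum_single f

/-- Sum of monomials over the coarsenings of `γ`. -/
noncomputable def Dsum (γ : List ℕ) : QS := ((coars γ).map Mc).sum

lemma Dsum_nil : Dsum [] = Mc [] := by
  simp [Dsum, coars]

lemma mulQS_msum (m : Multiset (List ℕ)) (b : List ℕ) :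
    mulQS ((m.map Mc).sum) (Mc b) = (m.map fun a => ((qshuffle a b).map Mc).sum).sum := by
  induction m using Multiset.induction with
  | empty => simp [mulQS_zero_left]
  | cons a m ih =>
      simp only [Multiset.map_cons, Multiset.sum_cons, mulQS_add_left, mulQS_Mc_Mc, ih]

lemma mulQS_Dsum (γ b : List ℕ) :
    mulQS (Dsum γ) (Mc b) = ((coars γ).map fun a => ((qshuffle a b).map Mc).sum).sum :=
  mulQS_msum _ b

end AuxMul

section AuxGG

/-- The sum of monomials over `hq δ s`. -/
noncomputable def hqS (δ s : List ℕ) : QS := ((hq δ s).map Mc).sum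

/-- The partial alternating antipode sum. -/
noncomputable def GG (γ s : List ℕ) : QS :=
  ∑ i ∈ Finset.range (s.length + 1),
    ((-1 : ℚ)) ^ i • mulQS (Dsum ((s.take i).reverse ++ γ)) (Mc (s.drop i))

lemma GG_cons (γ : List ℕ) (a : ℕ) (s : List ℕ) :
    GG γ (a :: s) = mulQS (Dsum γ) (Mc (a :: s)) - GG (a :: γ) s := by
  unfold GG
  rw [List.length_cons, Finset.sum_range_succ']
  have hterm : ∀ i,
      ((-1 : ℚ)) ^ (i + 1) • mulQS (Dsum (((a :: s).take (i + 1)).reverse ++ γ))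
          (Mc ((a :: s).drop (i + 1)))
        = -(((-1 : ℚ)) ^ i • mulQS (Dsum ((s.take i).reverse ++ (a :: γ))) (Mc (s.drop i))) := by
    intro i
    rw [List.take_succ_cons, List.drop_succ_cons, List.reverse_cons, List.append_assoc,
      List.singleton_append, pow_succ, mul_comm, mul_smul, neg_one_smul]
  simp only [hterm]
  rw [Finset.sum_neg_distrib]
  simp only [List.take_zero, List.reverse_nil, List.nil_append, pow_zero, one_smul,
    List.drop_zero]
  abel

lemma qshuffle_split (h : ℕ) (r : List ℕ) (a : ℕ) (s : List ℕ) :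
    qshuffle (h :: r) (a :: s)
      = hq (h :: r) (a :: s) + (hq (a :: h :: r) s + hq (addFirst a (h :: r)) s) := by
  rw [qshuffle]
  simp only [hq, addFirst]
  rw [Nat.add_comm h a]
  abel

lemma Hsum : ∀ (s γ : List ℕ), γ ≠ [] → GG γ s = ((coars γ).map fun δ => hqS δ s).sum := by
  intro s
  induction s with
  | nil =>
      intro γ hγ
      obtain ⟨b, t, rfl⟩ : ∃ b t, γ = b :: t := by
        cases γ with
        | nil => exact absurd rfl hγ
        | cons b t => exact ⟨b, t, rfl⟩
      unfold GG
      simp only [List.length_nil, Nat.zero_add]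
      rw [Finset.sum_range_one]
      simp only [List.take_nil, List.reverse_nil, List.nil_append, List.drop_nil, pow_zero,
        one_smul]
      rw [mulQS_Mc_nil_right, Dsum]
      apply congrArg
      apply Multiset.map_congr rfl
      intro δ hδ
      obtain ⟨h, r, rfl⟩ : ∃ h r, δ = h :: r := by
        cases δ with
        | nil => exact absurd rfl (coars_ne_nil b t _ hδ)
        | cons h r => exact ⟨h, r, rfl⟩
      simp [hqS, hq, qshuffle_nil_right]
  | cons a s ih =>
      intro γ hγ
      obtain ⟨b, t, rfl⟩ : ∃ b t, γ = b :: t := by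
        cases γ with
        | nil => exact absurd rfl hγ
        | cons b t => exact ⟨b, t, rfl⟩
      rw [GG_cons, ih (a :: b :: t) (by simp)]
      rw [show coars (a :: b :: t) = (coars (b :: t)).map (a :: ·)
            + (coars (b :: t)).map (addFirst a) from by rw [coars, coars_addFirst]]
      rw [Multiset.map_add, Multiset.sum_add, Multiset.map_map, Multiset.map_map]
      rw [mulQS_Dsum]
      have key : (coars (b :: t)).map (fun δ => ((qshuffle δ (a :: s)).map Mc).sum)
          = (coars (b :: t)).map
              (fun δ => hqS δ (a :: s) + (hqS (a :: δ) s + hqS (addFirst a δ) s)) := by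
        apply Multiset.map_congr rfl
        intro δ hδ
        obtain ⟨h, r, rfl⟩ : ∃ h r, δ = h :: r := by
          cases δ with
          | nil => exact absurd rfl (coars_ne_nil b t _ hδ)
          | cons h r => exact ⟨h, r, rfl⟩
        rw [qshuffle_split]
        simp only [hqS, Multiset.map_add, Multiset.sum_add]
      rw [key, Multiset.sum_map_add, Multiset.sum_map_add]
      rw [show ((fun δ => hqS δ s) ∘ (a :: ·)) = (fun δ => hqS (a :: δ) s) from rfl,
        show ((fun δ => hqS δ s) ∘ addFirst a) = (fun δ => hqS (addFirst a δ) s) from rfl]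
      abel

lemma GG_nil (l : List ℕ) (hl : l ≠ []) : GG [] l = 0 := by
  obtain ⟨a, s, rfl⟩ : ∃ a s, l = a :: s := by
    cases l with
    | nil => exact absurd rfl hl
    | cons a s => exact ⟨a, s, rfl⟩
  rw [GG_cons, Hsum s [a] (by simp)]
  have h1 : coars [a] = {[a]} := by simp [coars]
  rw [h1]
  have h2 : hqS [a] s = Mc (a :: s) := by
    simp [hqS, hq, qshuffle]
  rw [Multiset.map_singleton, Multiset.sum_singleton, h2, Dsum_nil, mulQS_Mc_Mc]
  rw [show qshuffle [] (a :: s) = {a :: s} from by simp [qshuffle]]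
  simp

end AuxGG

section AuxAntipode

lemma S_Mc (S : QS →ₗ[ℚ] QS) (hS : IsAntipode S) :
    ∀ l : List ℕ, S (Mc l) = ((-1 : ℚ)) ^ l.length • Dsum l.reverse := by
  suffices H : ∀ m, ∀ l : List ℕ, l.length = m →
      S (Mc l) = ((-1 : ℚ)) ^ l.length • Dsum l.reverse by
    intro l; exact H l.length l rfl
  intro m
  induction m using Nat.strong_induction_on with
  | _ m ih =>
      intro l hlen
      have h := hS l
      rw [Finset.sum_range_succ, List.take_length, List.drop_length, mulQS_Mc_nil_right] at h
      have hterm : ∀ i ∈ Finset.range l.length,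
          mulQS (S (Mc (l.take i))) (Mc (l.drop i))
            = ((-1 : ℚ)) ^ i • mulQS (Dsum (l.take i).reverse) (Mc (l.drop i)) := by
        intro i hi
        have hi' : i < l.length := Finset.mem_range.1 hi
        have hlt : (l.take i).length = i := by
          rw [List.length_take]; omega
        rw [ih i (by omega) (l.take i) hlt, hlt, mulQS_smul_left]
      rw [Finset.sum_congr rfl hterm] at h
      by_cases hl : l = []
      · subst hl
        simp only [List.length_nil, Finset.range_zero, Finset.sum_empty, zero_add,
          if_pos rfl] at h
        simp [h, Dsum_nil]
      · rw [if_neg hl] at h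
        have hG := GG_nil l hl
        unfold GG at hG
        simp only [List.append_nil] at hG
        rw [Finset.sum_range_succ, List.take_length, List.drop_length,
          mulQS_Mc_nil_right] at hG
        have h1 := eq_neg_of_add_eq_zero_right h
        have h2 := eq_neg_of_add_eq_zero_right hG
        rw [h1, ← h2]

end AuxAntipode

section AuxFlag

variable {n : ℕ}

lemma isFlag_subset {C D : Finset (Finset (Fin n))} (hC : IsFlag n C) (h : D ⊆ C) :
    IsFlag n D :=
  ⟨fun A hA => hC.1 A (h hA), fun A hA B hB => hC.2 A (h hA) B (h hB)⟩

lemma fullChain_zero (C : Finset (Finset (Fin n))) : fullChain C 0 = ∅ := by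
  simp [fullChain]

lemma lv_le_card (C : Finset (Finset (Fin n))) (p : Fin n) : lv C p ≤ C.card :=
  Finset.card_filter_le _ _

lemma lv_eq_zero {D : Finset (Finset (Fin n))} {p : Fin n} (h : ∀ A ∈ D, p ∈ A) :
    lv D p = 0 := by
  unfold lv
  rw [Finset.card_eq_zero, Finset.filter_eq_empty_iff]
  intro A hA
  simp [h A hA]

lemma lv_insert (D : Finset (Finset (Fin n))) (m : Finset (Fin n)) (hm : m ∉ D) (p : Fin n) :
    lv (insert m D) p = (if p ∈ m then 0 else 1) + lv D p := by
  unfold lv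
  rw [Finset.filter_insert]
  by_cases hpm : p ∈ m
  · rw [if_neg (not_not_intro hpm), if_pos hpm, Nat.zero_add]
  · rw [if_pos hpm, if_neg hpm,
      Finset.card_insert_of_notMem (fun hcon => hm (Finset.mem_of_mem_filter m hcon))]
    omega

lemma fullChain_insert (D : Finset (Finset (Fin n))) (m : Finset (Fin n)) (hm : m ∉ D)
    (hsub : ∀ A ∈ D, m ⊆ A) (j : ℕ) :
    fullChain (insert m D) (j + 1) = m ∪ fullChain D j := by
  ext p
  simp only [fullChain, Finset.mem_filter, Finset.mem_univ, true_and, Finset.mem_union,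
    lv_insert D m hm p]
  by_cases hpm : p ∈ m
  · have h0 : lv D p = 0 := lv_eq_zero (fun A hA => hsub A hA hpm)
    simp [hpm, h0]
  · simp only [hpm, if_false, false_or]
    omega

lemma m_subset_fullChain {D : Finset (Finset (Fin n))} {m : Finset (Fin n)}
    (hsub : ∀ A ∈ D, m ⊆ A) (j : ℕ) : m ⊆ fullChain D (j + 1) := by
  intro p hp
  simp only [fullChain, Finset.mem_filter, Finset.mem_univ, true_and]
  rw [lv_eq_zero (fun A hA => hsub A hA hp)]
  omega

lemma headI_flagType (D : Finset (Finset (Fin n))) :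
    (flagType D).headI = (fullChain D 1).card := by
  unfold flagType
  rw [List.range_succ_eq_map, List.map_cons]
  simp [fullChain_zero]

lemma range_map_succ_eq {α : Type*} (f : ℕ → α) (k : ℕ) :
    (List.range (k + 1)).map f = f 0 :: (List.range k).map (fun j => f (j + 1)) := by
  rw [List.range_succ_eq_map, List.map_cons, List.map_map]
  exact congrArg (f 0 :: ·) (List.map_congr_left (fun j _ => rfl))

lemma flagType_insert (D : Finset (Finset (Fin n))) (m : Finset (Fin n)) (hm : m ∉ D)
    (hsub : ∀ A ∈ D, m ⊆ A) :
    flagType (insert m D)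
      = m.card :: ((flagType D).headI - m.card) :: (flagType D).tail := by
  have h1 : fullChain (insert m D) 1 = m := by
    rw [show (1 : ℕ) = 0 + 1 from rfl, fullChain_insert D m hm hsub 0, fullChain_zero,
      Finset.union_empty]
  have h2 : ∀ j, fullChain (insert m D) (j + 2) = fullChain D (j + 1) := by
    intro j
    rw [show j + 2 = (j + 1) + 1 from rfl, fullChain_insert D m hm hsub (j + 1),
      Finset.union_eq_right.2 (m_subset_fullChain hsub j)]
  have hDft : flagType D = ((fullChain D 1).card - (fullChain D 0).card)
      :: (List.range D.card).map
          (fun j => (fullChain D (j + 1 + 1)).card - (fullChain D (j + 1)).card) := by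
    unfold flagType
    exact range_map_succ_eq _ _
  have hE0 : flagType (insert m D) = (List.range (D.card + 1 + 1)).map
      (fun j => (fullChain (insert m D) (j + 1)).card - (fullChain (insert m D) j).card) := by
    unfold flagType
    rw [Finset.card_insert_of_notMem hm]
  rw [hE0, range_map_succ_eq, range_map_succ_eq, hDft]
  simp only [List.headI, List.tail_cons]
  congr 1
  · rw [h1, fullChain_zero]
    simp
  congr 1
  · show (fullChain (insert m D) (0 + 1 + 1)).card - (fullChain (insert m D) (0 + 1)).card = _
    rw [show (0 : ℕ) + 1 + 1 = 0 + 2 from rfl, h2 0, show (0 : ℕ) + 1 = 1 from rfl, h1,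
      fullChain_zero]
    simp
  · apply List.map_congr_left
    intro j _
    show (fullChain (insert m D) (j + 1 + 1 + 1)).card
        - (fullChain (insert m D) (j + 1 + 1)).card = _
    rw [show j + 1 + 1 + 1 = (j + 1) + 2 from rfl, show j + 1 + 1 = j + 2 from rfl,
      h2 (j + 1), h2 j]

lemma flag_exists_min {C : Finset (Finset (Fin n))} (hC : IsFlag n C) (hne : C.Nonempty) :
    ∃ m ∈ C, ∀ A ∈ C, m ⊆ A := by
  obtain ⟨m, hm, hmin⟩ := C.exists_min_image Finset.card hne
  refine ⟨m, hm, fun A hA => ?_⟩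
  rcases hC.2 m hm A hA with h | h
  · exact h
  · rw [Finset.eq_of_subset_of_card_le h (hmin A hA)]

lemma flagType_ne_nil (E : Finset (Finset (Fin n))) : flagType E ≠ [] := by
  unfold flagType
  simp

lemma powerset_flagType :
    ∀ E : Finset (Finset (Fin n)), IsFlag n E →
      Multiset.map flagType E.powerset.val = coars (flagType E) := by
  intro E
  induction E using Finset.strongInduction with
  | _ E ih =>
      intro hE
      rcases E.eq_empty_or_nonempty with rfl | hne
      · rw [Finset.powerset_empty]
        have h0 : flagType (∅ : Finset (Finset (Fin n)))
            = [(fullChain (∅ : Finset (Finset (Fin n))) 1).card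
                - (fullChain (∅ : Finset (Finset (Fin n))) 0).card] := by
          unfold flagType
          simp [List.range_succ]
        show Multiset.map flagType {∅} = _
        rw [Multiset.map_singleton, h0]
        simp [coars]
      · obtain ⟨m, hmE, hmin⟩ := flag_exists_min hE hne
        set E' := E.erase m with hE'def
        have hE' : IsFlag n E' := isFlag_subset hE (E.erase_subset m)
        have hmE' : m ∉ E' := Finset.notMem_erase m E
        have hsub : ∀ A ∈ E', m ⊆ A := fun A hA => hmin A (Finset.mem_of_mem_erase hA)
        have hEins : insert m E' = E := Finset.insert_erase hmE
        have ihE' := ih E' (Finset.erase_ssubset hmE) hE'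
        -- decompose the powerset
        have hdisj : Disjoint E'.powerset (E'.powerset.image (insert m)) := by
          rw [Finset.disjoint_left]
          intro D hD hD'
          obtain ⟨D', _, rfl⟩ := Finset.mem_image.1 hD'
          exact hmE' (Finset.mem_powerset.1 hD (Finset.mem_insert_self m D'))
        have hinj : ∀ x ∈ E'.powerset.val, ∀ y ∈ E'.powerset.val,
            insert m x = insert m y → x = y := by
          intro x hx y hy hxy
          have hmx : m ∉ x := fun h => hmE' (Finset.mem_powerset.1 (by exact hx) h)
          have hmy : m ∉ y := fun h => hmE' (Finset.mem_powerset.1 (by exact hy) h)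
          rw [← Finset.erase_insert hmx, ← Finset.erase_insert hmy, hxy]
        have himg : (E'.powerset.image (insert m)).val = E'.powerset.val.map (insert m) := by
          rw [Finset.image_val, Multiset.dedup_eq_self.2 (Multiset.Nodup.map_on hinj E'.powerset.nodup)]
        have hps : E.powerset.val = E'.powerset.val + E'.powerset.val.map (insert m) := by
          rw [← hEins, Finset.powerset_insert, ← Finset.disjUnion_eq_union _ _ hdisj]
          show (Finset.disjUnion _ _ hdisj).val = _
          rw [show (Finset.disjUnion E'.powerset (E'.powerset.image (insert m)) hdisj).val
              = E'.powerset.val + (E'.powerset.image (insert m)).val from rfl, himg]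
        rw [hps, Multiset.map_add, ihE', Multiset.map_map]
        -- pointwise description of the second piece
        have hpt : E'.powerset.val.map (flagType ∘ insert m)
            = E'.powerset.val.map
                (fun D => m.card :: ((flagType D).headI - m.card) :: (flagType D).tail) := by
          apply Multiset.map_congr rfl
          intro D hD
          have hDsub : D ⊆ E' := Finset.mem_powerset.1 hD
          exact flagType_insert D m (fun h => hmE' (hDsub h)) (fun A hA => hsub A (hDsub hA))
        rw [hpt]
        have hpt2 : E'.powerset.val.map
              (fun D => m.card :: ((flagType D).headI - m.card) :: (flagType D).tail)
            = (E'.powerset.val.map flagType).map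
                (fun δ => m.card :: (δ.headI - m.card) :: δ.tail) := by
          rw [Multiset.map_map]
          rfl
        rw [hpt2, ihE']
        -- now pure coars manipulation
        obtain ⟨h₀, t₀, hτ⟩ : ∃ h t, flagType E' = h :: t := by
          cases hfe : flagType E' with
          | nil => exact absurd hfe (flagType_ne_nil E')
          | cons h t => exact ⟨h, t, rfl⟩
        have ha : m.card ≤ h₀ := by
          have : m ⊆ fullChain E' 1 := m_subset_fullChain hsub 0
          have hcard := Finset.card_le_card this
          have := headI_flagType E'
          rw [hτ] at this
          simp only [List.headI] at this
          omega
        have hET : flagType E = m.card :: (h₀ - m.card) :: t₀ := by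
          rw [← hEins, flagType_insert E' m hmE' hsub, hτ]
          rfl
        rw [hET, hτ]
        rw [show coars (m.card :: (h₀ - m.card) :: t₀)
            = ((coars ((h₀ - m.card) :: t₀)).map (m.card :: ·))
              + coars ((m.card + (h₀ - m.card)) :: t₀) from by rw [coars]]
        rw [show m.card + (h₀ - m.card) = h₀ from by omega]
        have hsplit : coars (h₀ :: t₀)
            = (coars ((h₀ - m.card) :: t₀)).map (addFirst m.card) := by
          rw [← coars_addFirst, show m.card + (h₀ - m.card) = h₀ from by omega]
        rw [hsplit, Multiset.map_map]
        have hlast : (coars ((h₀ - m.card) :: t₀)).map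
              ((fun δ => m.card :: (δ.headI - m.card) :: δ.tail) ∘ addFirst m.card)
            = (coars ((h₀ - m.card) :: t₀)).map (m.card :: ·) := by
          apply Multiset.map_congr rfl
          intro δ hδ
          obtain ⟨d, r, rfl⟩ : ∃ d r, δ = d :: r := by
            cases δ with
            | nil => exact absurd rfl (coars_ne_nil _ _ _ hδ)
            | cons d r => exact ⟨d, r, rfl⟩
          show m.card :: (m.card + d - m.card) :: r = m.card :: d :: r
          rw [show m.card + d - m.card = d from by omega]
        rw [hlast]
        exact add_comm _ _

end AuxFlag

section AuxFop

variable {n : ℕ}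

lemma complFin_injective : Function.Injective (fun A : Finset (Fin n) => Finset.univ \ A) := by
  intro A B h
  have hA : Finset.univ \ (Finset.univ \ A) = A := by
    rw [Finset.sdiff_sdiff_self_left]
    exact Finset.inter_eq_right.2 (Finset.subset_univ A)
  have hB : Finset.univ \ (Finset.univ \ B) = B := by
    rw [Finset.sdiff_sdiff_self_left]
    exact Finset.inter_eq_right.2 (Finset.subset_univ B)
  rw [← hA, ← hB, show (Finset.univ \ A) = (Finset.univ \ B) from h]

lemma card_FopFlag (C : Finset (Finset (Fin n))) : (FopFlag C).card = C.card :=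
  Finset.card_image_of_injective _ complFin_injective

lemma isFlag_FopFlag {C : Finset (Finset (Fin n))} (hC : IsFlag n C) :
    IsFlag n (FopFlag C) := by
  constructor
  · intro B hB
    obtain ⟨A, hA, rfl⟩ := Finset.mem_image.1 hB
    obtain ⟨hAne, hAuniv⟩ := hC.1 A hA
    constructor
    · rw [Finset.sdiff_nonempty]
      intro hcon
      exact hAuniv (Finset.univ_subset_iff.1 hcon)
    · intro hcon
      obtain ⟨x, hx⟩ := hAne
      have hx2 : x ∈ Finset.univ \ A := by
        rw [hcon]
        exact Finset.mem_univ x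
      exact (Finset.mem_sdiff.1 hx2).2 hx
  · intro B hB B' hB'
    obtain ⟨A, hA, rfl⟩ := Finset.mem_image.1 hB
    obtain ⟨A', hA', rfl⟩ := Finset.mem_image.1 hB'
    rcases hC.2 A hA A' hA' with h | h
    · exact Or.inr (Finset.sdiff_subset_sdiff (Finset.Subset.refl _) h)
    · exact Or.inl (Finset.sdiff_subset_sdiff (Finset.Subset.refl _) h)

lemma lv_FopFlag (C : Finset (Finset (Fin n))) (p : Fin n) :
    lv (FopFlag C) p = C.card - lv C p := by
  unfold lv FopFlag
  rw [Finset.filter_image]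
  rw [Finset.card_image_of_injective _ complFin_injective]
  have h1 : C.filter (fun A => p ∉ Finset.univ \ A) = C.filter (fun A => p ∈ A) := by
    apply Finset.filter_congr
    intro A _
    simp
  rw [h1]
  have h2 := Finset.card_filter_add_card_filter_not (s := C) (p := fun A => p ∈ A)
  have h3 : C.filter (fun A => ¬ p ∈ A) = C.filter (fun A => p ∉ A) := rfl
  omega

lemma flagType_levels (C : Finset (Finset (Fin n))) :
    flagType C = (List.range (C.card + 1)).map
      (fun j => (Finset.univ.filter (fun p : Fin n => lv C p = j)).card) := by
  unfold flagType
  apply List.map_congr_left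
  intro j _
  have hstep : (fullChain C (j + 1)).card
      = (fullChain C j).card + (Finset.univ.filter (fun p : Fin n => lv C p = j)).card := by
    unfold fullChain
    rw [show Finset.univ.filter (fun p : Fin n => lv C p < j + 1)
        = Finset.univ.filter (fun p : Fin n => lv C p < j)
          ∪ Finset.univ.filter (fun p : Fin n => lv C p = j) from by
      rw [← Finset.filter_or]
      apply Finset.filter_congr
      intro p _
      constructor
      · intro h; omega
      · intro h; omega]
    rw [Finset.card_union_of_disjoint]
    rw [Finset.disjoint_left]
    intro p hp hp'
    simp only [Finset.mem_filter] at hp hp'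
    omega
  omega

lemma reverse_map_range {α : Type*} (g : ℕ → α) :
    ∀ N : ℕ, ((List.range N).map g).reverse = (List.range N).map (fun j => g (N - 1 - j)) := by
  intro N
  induction N generalizing g with
  | zero => simp
  | succ N ih =>
      conv_lhs => rw [List.range_succ]
      conv_rhs => rw [List.range_succ_eq_map]
      rw [List.map_append, List.reverse_append, List.map_singleton, List.reverse_singleton,
        List.singleton_append, ih g, List.map_cons, List.map_map]
      congr 1
      apply List.map_congr_left
      intro j hj
      show g (N - 1 - j) = g (N + 1 - 1 - Nat.succ j)
      congr 1
      omega

lemma flagType_FopFlag (C : Finset (Finset (Fin n))) :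
    flagType (FopFlag C) = (flagType C).reverse := by
  rw [flagType_levels C, flagType_levels (FopFlag C), card_FopFlag]
  rw [reverse_map_range]
  apply List.map_congr_left
  intro j hj
  have hjC : j < C.card + 1 := List.mem_range.1 hj
  apply congrArg
  apply Finset.filter_congr
  intro p _
  rw [lv_FopFlag]
  have := lv_le_card C p
  constructor
  · intro h; omega
  · intro h; omega

end AuxFop

/-- The antipode `S` of `QSym` acts on the monomial quasisymmetric function
`M_F = M_{type(F)}` associated to a flag `F` of subsets of `[n]` by
`S(M_F) = (-1)^{|F|+1} Σ_{G ⪯ F^{op}} M_G`, the sum running over all flags `G` refined by the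
opposite flag `F^{op}` (i.e. over all subchains of `F^{op}`). -/
theorem antipode_monomial_flag (n : ℕ) (hn : 0 < n)
    (S : QS →ₗ[ℚ] QS) (hS : IsAntipode S)
    (C : Finset (Finset (Fin n))) (hC : IsFlag n C) :
    S (Mc (flagType C))
      = ((-1 : ℚ) ^ (C.card + 1)) • ∑ D ∈ (FopFlag C).powerset, Mc (flagType D) := by
  rw [S_Mc S hS (flagType C)]
  have hlen : (flagType C).length = C.card + 1 := by simp [flagType]
  rw [hlen]
  congr 1
  rw [← flagType_FopFlag C]
  rw [Dsum, ← powerset_flagType (FopFlag C) (isFlag_FopFlag hC)]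
  rw [Multiset.map_map]
  rfl
end

section
/- For a connected building set B on [n] and any flag L of subsets of [n], the P_B-rank of L equals the rank of L according to B: rk_{P_B}(L) = rk_B(L) = n − c(B/L), where c(B/L) is the number of connected components of the quotient building set B/L. -/
open scoped Classical Pointwise BigOperators


/-- A building set on the ground set `[n]`: a collection of nonempty subsets containing all
singletons and closed under unions of intersecting members. -/
def IsBuildingSet (n : ℕ) (B : Finset (Finset (Fin n))) : Prop :=
  (∀ I ∈ B, I.Nonempty) ∧ (∀ i : Fin n, {i} ∈ B) ∧
    (∀ I ∈ B, ∀ J ∈ B, (I ∩ J).Nonempty → I ∪ J ∈ B)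

/-- The face `Conv{e_i : i ∈ I}` of the standard simplex. -/
noncomputable def simplexFace {n : ℕ} (I : Finset (Fin n)) : Set (Fin n → ℝ) :=
  convexHull ℝ ((fun i => (Pi.single i 1 : Fin n → ℝ)) '' (I : Set (Fin n)))

/-- The nestohedron `P_B = Σ_{I ∈ B} Conv{e_i : i ∈ I}` (Minkowski sum). -/
noncomputable def nestoh {n : ℕ} (B : Finset (Finset (Fin n))) : Set (Fin n → ℝ) :=
  ∑ I ∈ B, simplexFace I

/-- The facet `F_I` of the nestohedron labelled by `I ∈ B ∖ {[n]}`: the face on which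
`Σ_{i ∈ I} x_i` is minimized. -/
noncomputable def facetOf {n : ℕ} (B : Finset (Finset (Fin n))) (I : Finset (Fin n)) :
    Set (Fin n → ℝ) :=
  argmaxSet (nestoh B) (fun j => if j ∈ I then (-1 : ℝ) else 0)

/-- A nested set for a connected building set `B`: a subcollection of `B ∖ {[n]}` any two of whose
members are nested or disjoint, such that no union of at least two pairwise disjoint members
belongs to `B`. -/
def IsNestedSet {n : ℕ} (B N : Finset (Finset (Fin n))) : Prop :=
  N ⊆ B.erase Finset.univ ∧
  (∀ I ∈ N, ∀ J ∈ N, I ⊆ J ∨ J ⊆ I ∨ Disjoint I J) ∧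
  (∀ D ∈ N.powerset, 2 ≤ D.card → (∀ I ∈ D, ∀ J ∈ D, I ≠ J → Disjoint I J) →
    D.sup id ∉ B)

/-- The set of roots of `I` with respect to a nested set `N`:
`I^{root} = I ∖ ⋃ {J ∈ N : J ⊊ I}`. -/
def rootsOf {n : ℕ} (N : Finset (Finset (Fin n))) (I : Finset (Fin n)) : Finset (Fin n) :=
  I \ ((N.filter (fun J => J ⊂ I)).sup id)

/-- The preorder `≼_G` on `[n]` attached to the face `G` of `P_B` with nested set `N`:
`i ≼_G j` iff `i ∈ I` and `j ∈ I^{root}` for some `I ∈ N ∪ {[n]}`. -/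
def preN {n : ℕ} (N : Finset (Finset (Fin n))) (i j : Fin n) : Prop :=
  ∃ I ∈ insert Finset.univ N, i ∈ I ∧ j ∈ rootsOf N I

/-- The face of the nestohedron `P_B` corresponding to a nested set `N`:
`G = F_{I₁} ∩ ⋯ ∩ F_{I_m}` (and `G = P_B` when `N = ∅`). -/
noncomputable def faceOfNested {n : ℕ} (B N : Finset (Finset (Fin n))) : Set (Fin n → ℝ) :=
  nestoh B ∩ ⋂ I ∈ N, facetOf B I

/-- The number of connected components of a building set: the number of its maximal members. -/
def cComp {n : ℕ} (B : Finset (Finset (Fin n))) : ℕ :=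
  (B.filter (fun I => ∀ J ∈ B, I ⊆ J → I = J)).card

/-- The minor `(B|_X)/Y` (restriction to `X` followed by contraction of `Y ⊆ X`): all nonempty
`I ⊆ X ∖ Y` such that `I ∪ S' ∈ B` for some `S' ⊆ Y`. -/
def bsMinor {n : ℕ} (B : Finset (Finset (Fin n))) (X Y : Finset (Fin n)) :
    Finset (Finset (Fin n)) :=
  (X \ Y).powerset.filter (fun I => I.Nonempty ∧ ∃ S' ∈ Y.powerset, I ∪ S' ∈ B)

/-- The rank `rk_B(L) = Σ_j rk(B|_{I_j}/I_{j-1})` of a flag `L` with respect to `B`, where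
`rk(B') = (size of the ground set of B') - c(B')`. -/
def rkB {n : ℕ} (B : Finset (Finset (Fin n))) (C : Finset (Finset (Fin n))) : ℕ :=
  ∑ j ∈ Finset.range (C.card + 1),
    ((fullChain C (j + 1)).card - (fullChain C j).card -
      cComp (bsMinor B (fullChain C (j + 1)) (fullChain C j)))

/-- The quotient building set `B/L = ⊕_j (B|_{I_j})/I_{j-1}` of a flag `L`. -/
def quotientBS {n : ℕ} (B : Finset (Finset (Fin n))) (C : Finset (Finset (Fin n))) :
    Finset (Finset (Fin n)) :=
  (Finset.range (C.card + 1)).biUnion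
    (fun j => bsMinor B (fullChain C (j + 1)) (fullChain C j))

section Comb

variable {n : ℕ}

lemma mem_fullChain {C : Finset (Finset (Fin n))} {j : ℕ} {p : Fin n} :
    p ∈ fullChain C j ↔ lv C p < j := by simp [fullChain]

lemma fullChain_last (C : Finset (Finset (Fin n))) : fullChain C (C.card + 1) = Finset.univ := by
  ext p; simp [mem_fullChain, Nat.lt_succ_iff, lv_le_card]

lemma fullChain_mono (C : Finset (Finset (Fin n))) {j k : ℕ} (h : j ≤ k) :
    fullChain C j ⊆ fullChain C k := fun p hp => mem_fullChain.2 (lt_of_lt_of_le (mem_fullChain.1 hp) h)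

lemma mem_block {C : Finset (Finset (Fin n))} {j : ℕ} {p : Fin n} :
    p ∈ fullChain C (j+1) \ fullChain C j ↔ lv C p = j := by
  simp [mem_fullChain, Nat.lt_succ_iff]; omega

lemma mem_bsMinor {B : Finset (Finset (Fin n))} {X Y : Finset (Fin n)} {I : Finset (Fin n)} :
    I ∈ bsMinor B X Y ↔ I ⊆ X \ Y ∧ I.Nonempty ∧ ∃ S' ⊆ Y, I ∪ S' ∈ B := by
  simp [bsMinor]

lemma lv_of_mem_minor {B C : Finset (Finset (Fin n))} {j : ℕ} {I : Finset (Fin n)}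
    (hI : I ∈ bsMinor B (fullChain C (j+1)) (fullChain C j)) {p : Fin n} (hp : p ∈ I) :
    lv C p = j :=
  mem_block.1 ((mem_bsMinor.1 hI).1 hp)

/-- Each minor is closed under unions of intersecting members. -/
lemma minor_union {B C : Finset (Finset (Fin n))} (hB : IsBuildingSet n B) {j : ℕ}
    {I J : Finset (Fin n)} (hI : I ∈ bsMinor B (fullChain C (j+1)) (fullChain C j))
    (hJ : J ∈ bsMinor B (fullChain C (j+1)) (fullChain C j)) (hIJ : (I ∩ J).Nonempty) :
    I ∪ J ∈ bsMinor B (fullChain C (j+1)) (fullChain C j) := by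
  obtain ⟨hIs, hIne, S1, hS1, hS1B⟩ := mem_bsMinor.1 hI
  obtain ⟨hJs, hJne, S2, hS2, hS2B⟩ := mem_bsMinor.1 hJ
  refine mem_bsMinor.2 ⟨Finset.union_subset hIs hJs, hIne.mono Finset.subset_union_left,
    S1 ∪ S2, Finset.union_subset hS1 hS2, ?_⟩
  have : (I ∪ S1) ∪ (J ∪ S2) ∈ B := by
    apply hB.2.2 _ hS1B _ hS2B
    obtain ⟨p, hp⟩ := hIJ
    exact ⟨p, Finset.mem_inter.2 ⟨Finset.mem_union_left _ (Finset.mem_inter.1 hp).1,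
      Finset.mem_union_left _ (Finset.mem_inter.1 hp).2⟩⟩
  have h2 : (I ∪ S1) ∪ (J ∪ S2) = (I ∪ J) ∪ (S1 ∪ S2) := by
    ext p; simp [Finset.mem_union]; tauto
  rwa [h2] at this

lemma mem_quotientBS {B C : Finset (Finset (Fin n))} {I : Finset (Fin n)} :
    I ∈ quotientBS B C ↔ ∃ j < C.card + 1, I ∈ bsMinor B (fullChain C (j+1)) (fullChain C j) := by
  simp [quotientBS]

lemma quot_nonempty {B C : Finset (Finset (Fin n))} {I : Finset (Fin n)}
    (hI : I ∈ quotientBS B C) : I.Nonempty := by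
  obtain ⟨j, _, hI⟩ := mem_quotientBS.1 hI
  exact (mem_bsMinor.1 hI).2.1

lemma quot_lv_const {B C : Finset (Finset (Fin n))} {I : Finset (Fin n)}
    (hI : I ∈ quotientBS B C) {p q : Fin n} (hp : p ∈ I) (hq : q ∈ I) :
    lv C p = lv C q := by
  obtain ⟨j, _, hI⟩ := mem_quotientBS.1 hI
  rw [lv_of_mem_minor hI hp, lv_of_mem_minor hI hq]

/-- The quotient building set is closed under unions of intersecting members. -/
lemma quot_union {B C : Finset (Finset (Fin n))} (hB : IsBuildingSet n B)
    {I J : Finset (Fin n)} (hI : I ∈ quotientBS B C) (hJ : J ∈ quotientBS B C)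
    (hIJ : (I ∩ J).Nonempty) : I ∪ J ∈ quotientBS B C := by
  obtain ⟨j, hj, hI'⟩ := mem_quotientBS.1 hI
  obtain ⟨j', hj', hJ'⟩ := mem_quotientBS.1 hJ
  obtain ⟨p, hp⟩ := hIJ
  have hpI := (Finset.mem_inter.1 hp).1
  have hpJ := (Finset.mem_inter.1 hp).2
  have : j = j' := by rw [← lv_of_mem_minor hI' hpI, ← lv_of_mem_minor hJ' hpJ]
  subst this
  exact mem_quotientBS.2 ⟨j, hj, minor_union hB hI' hJ' ⟨p, hp⟩⟩

lemma singleton_mem_quot {B C : Finset (Finset (Fin n))} (hB : IsBuildingSet n B) (i : Fin n) :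
    {i} ∈ quotientBS B C := by
  refine mem_quotientBS.2 ⟨lv C i, Nat.lt_succ_of_le (lv_le_card C i), mem_bsMinor.2 ?_⟩
  refine ⟨by simp only [Finset.singleton_subset_iff]; exact mem_block.2 rfl,
    ⟨i, Finset.mem_singleton_self i⟩,
    ∅, Finset.empty_subset _, by simpa using hB.2.1 i⟩

/-- Every member of the quotient building set is contained in a maximal member. -/
lemma exists_maximal_quot {B C : Finset (Finset (Fin n))} {I : Finset (Fin n)}
    (hI : I ∈ quotientBS B C) :
    ∃ T ∈ (quotientBS B C).filter (fun I => ∀ J ∈ quotientBS B C, I ⊆ J → I = J), I ⊆ T := by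
  classical
  obtain ⟨T, hT, hmax⟩ := Finset.exists_max_image ((quotientBS B C).filter (fun J => I ⊆ J))
    Finset.card (⟨I, Finset.mem_filter.2 ⟨hI, le_refl _⟩⟩)
  rw [Finset.mem_filter] at hT
  refine ⟨T, Finset.mem_filter.2 ⟨hT.1, fun J hJ hTJ => ?_⟩, hT.2⟩
  have hJ' : J ∈ (quotientBS B C).filter (fun J => I ⊆ J) :=
    Finset.mem_filter.2 ⟨hJ, hT.2.trans hTJ⟩
  exact Finset.eq_of_subset_of_card_le hTJ (hmax J hJ')

/-- Intersecting a maximal member forces containment. -/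
lemma subset_of_maximal_inter {B C : Finset (Finset (Fin n))} (hB : IsBuildingSet n B)
    {K T : Finset (Fin n)} (hK : K ∈ quotientBS B C)
    (hT : T ∈ (quotientBS B C).filter (fun I => ∀ J ∈ quotientBS B C, I ⊆ J → I = J))
    (hKT : (K ∩ T).Nonempty) : K ⊆ T := by
  rw [Finset.mem_filter] at hT
  have hu := quot_union hB hK hT.1 hKT
  have := hT.2 _ hu (Finset.subset_union_right)
  exact this ▸ Finset.subset_union_left

end Comb
section PartA

variable {n : ℕ}

lemma minor_subset_quot {B C : Finset (Finset (Fin n))} {j : ℕ} (hj : j < C.card + 1) :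
    bsMinor B (fullChain C (j+1)) (fullChain C j) ⊆ quotientBS B C := fun I hI =>
  mem_quotientBS.2 ⟨j, hj, hI⟩

lemma maximal_minor_iff {B C : Finset (Finset (Fin n))} {j : ℕ} (hj : j < C.card + 1)
    {I : Finset (Fin n)} (hI : I ∈ bsMinor B (fullChain C (j+1)) (fullChain C j)) :
    (∀ J ∈ quotientBS B C, I ⊆ J → I = J) ↔
    (∀ J ∈ bsMinor B (fullChain C (j+1)) (fullChain C j), I ⊆ J → I = J) := by
  constructor
  · exact fun h J hJ hIJ => h J (minor_subset_quot hj hJ) hIJ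
  · intro h J hJ hIJ
    obtain ⟨j', hj', hJ'⟩ := mem_quotientBS.1 hJ
    obtain ⟨p, hp⟩ := (mem_bsMinor.1 hI).2.1
    have : j' = j := by rw [← lv_of_mem_minor hJ' (hIJ hp), lv_of_mem_minor hI hp]
    exact h J (this ▸ hJ') hIJ

lemma cComp_quot_eq_sum (B C : Finset (Finset (Fin n))) :
    cComp (quotientBS B C) = ∑ j ∈ Finset.range (C.card + 1),
      cComp (bsMinor B (fullChain C (j+1)) (fullChain C j)) := by
  classical
  unfold cComp quotientBS
  rw [Finset.filter_biUnion, Finset.card_biUnion]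
  · apply Finset.sum_congr rfl
    intro j hj
    rw [Finset.mem_range] at hj
    congr 1
    apply Finset.filter_congr
    intro I hI
    exact maximal_minor_iff hj hI
  · intro j hj j' hj' hne
    rw [Finset.coe_range, Set.mem_Iio] at hj hj'
    rw [Function.onFun_apply, Finset.disjoint_left]
    intro I hI hI'
    have hI1 := Finset.mem_of_mem_filter I hI
    have hI2 := Finset.mem_of_mem_filter I hI'
    obtain ⟨p, hp⟩ := (mem_bsMinor.1 hI1).2.1
    exact hne (by rw [← lv_of_mem_minor hI1 hp, lv_of_mem_minor hI2 hp])

lemma maximals_pairwise_disjoint_minor {B C : Finset (Finset (Fin n))} (hB : IsBuildingSet n B)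
    {j : ℕ} {T T' : Finset (Fin n)}
    (hT : T ∈ (bsMinor B (fullChain C (j+1)) (fullChain C j)).filter
      (fun I => ∀ J ∈ bsMinor B (fullChain C (j+1)) (fullChain C j), I ⊆ J → I = J))
    (hT' : T' ∈ (bsMinor B (fullChain C (j+1)) (fullChain C j)).filter
      (fun I => ∀ J ∈ bsMinor B (fullChain C (j+1)) (fullChain C j), I ⊆ J → I = J))
    (hne : T ≠ T') : Disjoint T T' := by
  rw [Finset.mem_filter] at hT hT'
  rw [Finset.disjoint_left]
  intro p hp hp'
  have hu := minor_union (C := C) hB hT.1 hT'.1 ⟨p, Finset.mem_inter.2 ⟨hp, hp'⟩⟩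
  have h1 := hT.2 _ hu Finset.subset_union_left
  have h2 := hT'.2 _ hu Finset.subset_union_right
  exact hne (h1.trans h2.symm)

lemma cComp_minor_le (B : Finset (Finset (Fin n))) (hB : IsBuildingSet n B)
    (C : Finset (Finset (Fin n))) (j : ℕ) :
    cComp (bsMinor B (fullChain C (j+1)) (fullChain C j)) ≤
      (fullChain C (j+1)).card - (fullChain C j).card := by
  classical
  set M := bsMinor B (fullChain C (j+1)) (fullChain C j) with hM
  set F := M.filter (fun I => ∀ J ∈ M, I ⊆ J → I = J) with hF
  have hdisj : ∀ T ∈ F, ∀ T' ∈ F, T ≠ T' → Disjoint (id T) (id T') := by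
    intro T hT T' hT' hne
    exact maximals_pairwise_disjoint_minor hB hT hT' hne
  have h1 : F.card ≤ (F.biUnion id).card := by
    rw [Finset.card_biUnion hdisj]
    calc F.card = ∑ T ∈ F, 1 := by simp
    _ ≤ ∑ T ∈ F, (id T).card := by
        apply Finset.sum_le_sum
        intro T hT
        have : (T : Finset (Fin n)).Nonempty := (mem_bsMinor.1 (Finset.mem_of_mem_filter T hT)).2.1
        exact Finset.card_pos.2 this
  have h2 : F.biUnion id ⊆ fullChain C (j+1) \ fullChain C j := by
    intro p hp
    obtain ⟨T, hT, hpT⟩ := Finset.mem_biUnion.1 hp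
    exact (mem_bsMinor.1 (Finset.mem_of_mem_filter T hT)).1 hpT
  calc cComp M = F.card := rfl
  _ ≤ (F.biUnion id).card := h1
  _ ≤ (fullChain C (j+1) \ fullChain C j).card := Finset.card_le_card h2
  _ = (fullChain C (j+1)).card - (fullChain C j).card :=
      Finset.card_sdiff_of_subset (fullChain_mono C (Nat.le_succ j))

lemma tele_sum (f : ℕ → ℕ) (hf : Monotone f) (h0 : f 0 = 0) (m : ℕ) :
    ∑ j ∈ Finset.range m, (f (j+1) - f j) = f m := by
  induction m with
  | zero => simp [h0]
  | succ m ih =>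
    rw [Finset.sum_range_succ, ih]
    have h : f m ≤ f (m + 1) := hf (by omega)
    omega

lemma sum_blocks_eq (C : Finset (Finset (Fin n))) :
    ∑ j ∈ Finset.range (C.card + 1), ((fullChain C (j+1)).card - (fullChain C j).card) = n := by
  rw [tele_sum (fun j => (fullChain C j).card)
    (fun a b hab => Finset.card_le_card (fullChain_mono C hab))
    (by simp [fullChain_zero])]
  rw [fullChain_last]
  simp

lemma partA (B : Finset (Finset (Fin n))) (hB : IsBuildingSet n B)
    (C : Finset (Finset (Fin n))) :
    rkB B C = n - cComp (quotientBS B C) := by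
  have key : rkB B C + cComp (quotientBS B C) = n := by
    rw [cComp_quot_eq_sum, rkB, ← Finset.sum_add_distrib]
    have heq : ∑ j ∈ Finset.range (C.card + 1),
        ((fullChain C (j+1)).card - (fullChain C j).card -
          cComp (bsMinor B (fullChain C (j+1)) (fullChain C j)) +
          cComp (bsMinor B (fullChain C (j+1)) (fullChain C j))) =
        ∑ j ∈ Finset.range (C.card + 1),
          ((fullChain C (j+1)).card - (fullChain C j).card) := by
      apply Finset.sum_congr rfl
      intro j hj
      have := cComp_minor_le B hB C j
      omega
    rw [heq, sum_blocks_eq]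
  omega

end PartA
section Geo1

variable {n : ℕ}

/-- `dotp ω` as a linear map. -/
noncomputable def dlin (ω : Fin n → ℝ) : (Fin n → ℝ) →ₗ[ℝ] ℝ where
  toFun x := dotp ω x
  map_add' x y := by simp [dotp, mul_add, Finset.sum_add_distrib]
  map_smul' c x := by simp [dotp, Finset.mul_sum, mul_left_comm]

lemma dlin_apply (ω x : Fin n → ℝ) : dlin ω x = dotp ω x := rfl

lemma dotp_single (ω : Fin n → ℝ) (i : Fin n) : dotp ω (Pi.single i 1) = ω i := by
  simp [dotp, Pi.single_apply]

lemma dotp_finsum {ι : Type*} (ω : Fin n → ℝ) (s : Finset ι) (g : ι → (Fin n → ℝ)) :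
    dotp ω (∑ i ∈ s, g i) = ∑ i ∈ s, dotp ω (g i) := by
  exact map_sum (dlin ω) g s

lemma argmaxSet_convexHull (s : Finset (Fin n → ℝ)) (hs : s.Nonempty) (ω : Fin n → ℝ) :
    argmaxSet (convexHull ℝ ↑s) ω =
      convexHull ℝ ↑(s.filter (fun v => ∀ w ∈ s, dotp ω w ≤ dotp ω v)) := by
  classical
  obtain ⟨v₀, hv₀, hmax⟩ := Finset.exists_max_image s (dotp ω) hs
  set M := dotp ω v₀ with hM
  set t := s.filter (fun v => ∀ w ∈ s, dotp ω w ≤ dotp ω v) with ht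
  have hv₀t : v₀ ∈ t := Finset.mem_filter.2 ⟨hv₀, hmax⟩
  have hub : ∀ x ∈ convexHull ℝ (↑s : Set (Fin n → ℝ)), dotp ω x ≤ M := by
    intro x hx
    have h1 : convexHull ℝ (↑s : Set (Fin n → ℝ)) ⊆ {x | dlin ω x ≤ M} :=
      convexHull_min (fun w hw => hmax w (by exact_mod_cast hw))
        (convex_halfSpace_le (dlin ω).isLinear M)
    exact h1 hx
  have hattain : ∀ x ∈ convexHull ℝ (↑t : Set (Fin n → ℝ)), dotp ω x = M := by
    intro x hx
    have h1 : convexHull ℝ (↑t : Set (Fin n → ℝ)) ⊆ {x | dlin ω x = M} := by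
      apply convexHull_min _ (convex_hyperplane (dlin ω).isLinear M)
      intro v hv
      rw [Finset.mem_coe, ht, Finset.mem_filter] at hv
      exact le_antisymm (hmax v hv.1) (hv.2 v₀ hv₀)
    exact h1 hx
  ext x
  constructor
  · rintro ⟨hx, hge⟩
    have hxM : dotp ω x = M :=
      le_antisymm (hub x hx) (hge v₀ (subset_convexHull ℝ _ hv₀))
    rw [Finset.convexHull_eq] at hx
    obtain ⟨w, hw0, hw1, hwx⟩ := hx
    have hkey : ∀ y ∈ s, w y * (M - dotp ω y) = 0 := by
      have hsum : ∑ y ∈ s, w y * (M - dotp ω y) = 0 := by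
        have hx' : dotp ω (s.centerMass w id) = ∑ y ∈ s, w y * dotp ω y := by
          rw [Finset.centerMass_eq_of_sum_1 _ _ hw1]
          rw [dotp_finsum]
          apply Finset.sum_congr rfl
          intro y hy
          show dotp ω (w y • y) = w y * dotp ω y
          exact (dlin ω).map_smul (w y) y
        have : ∑ y ∈ s, w y * dotp ω y = M := by rw [← hx', hwx, hxM]
        calc ∑ y ∈ s, w y * (M - dotp ω y)
            = (∑ y ∈ s, w y) * M - ∑ y ∈ s, w y * dotp ω y := by
              rw [Finset.sum_mul, ← Finset.sum_sub_distrib]; congr 1; ext y; ring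
          _ = 0 := by rw [hw1, this]; ring
      intro y hy
      have h0 : ∀ y ∈ s, 0 ≤ w y * (M - dotp ω y) := fun y hy =>
        mul_nonneg (hw0 y hy) (by linarith [hmax y hy])
      exact (Finset.sum_eq_zero_iff_of_nonneg h0).1 hsum y hy
    have hsub : s.filter (fun y => w y ≠ 0) ⊆ t := by
      intro y hy
      rw [Finset.mem_filter] at hy
      have hyM : dotp ω y = M := by
        have := hkey y hy.1
        rcases mul_eq_zero.1 this with h | h
        · exact absurd h hy.2
        · linarith
      refine Finset.mem_filter.2 ⟨hy.1, fun v hv => ?_⟩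
      rw [hyM]; exact hmax v hv
    rw [← hwx, ← Finset.centerMass_filter_ne_zero]
    apply convexHull_mono (Finset.coe_subset.2 hsub)
    apply Finset.centerMass_mem_convexHull
    · intro i hi; exact hw0 i (Finset.mem_of_mem_filter i hi)
    · rw [Finset.sum_filter_ne_zero, hw1]; norm_num
    · intro i hi; exact Finset.mem_coe.2 hi
  · intro hx
    refine ⟨convexHull_mono (Finset.coe_subset.2 (Finset.filter_subset _ _)) hx, fun y hy => ?_⟩
    rw [hattain x hx]
    exact hub y hy

end Geo1
section Geo2

variable {n : ℕ}

/-- The set of maximal-level elements of `I`. -/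
noncomputable def Kset (C : Finset (Finset (Fin n))) (I : Finset (Fin n)) : Finset (Fin n) :=
  I.filter (fun i => ∀ i' ∈ I, lv C i' ≤ lv C i)

/-- The linear functional given by levels. -/
noncomputable def wlv (C : Finset (Finset (Fin n))) : Fin n → ℝ := fun p => (lv C p : ℝ)

lemma mem_Kset {C : Finset (Finset (Fin n))} {I : Finset (Fin n)} {i : Fin n} :
    i ∈ Kset C I ↔ i ∈ I ∧ ∀ i' ∈ I, lv C i' ≤ lv C i := by simp [Kset]

lemma Kset_nonempty {C : Finset (Finset (Fin n))} {I : Finset (Fin n)} (hI : I.Nonempty) :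
    (Kset C I).Nonempty := by
  obtain ⟨m, hm, hmax⟩ := Finset.exists_max_image I (lv C) hI
  exact ⟨m, mem_Kset.2 ⟨hm, hmax⟩⟩

lemma wlv_mem_relint {C : Finset (Finset (Fin n))} (hC : IsFlag n C) :
    wlv C ∈ relintBraidCone C := by
  intro p q
  constructor
  · intro h
    have : C.filter (fun A => p ∉ A) = C.filter (fun A => q ∉ A) := by
      apply Finset.filter_congr
      intro A hA
      simp only [eq_iff_iff, not_iff_not]
      exact h A hA
    simp only [wlv, lv, this]
  · rintro ⟨A, hA, hpA, hqA⟩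
    have hlt : lv C p < lv C q := by
      apply Finset.card_lt_card
      constructor
      · intro B' hB'
        rw [Finset.mem_filter] at hB' ⊢
        refine ⟨hB'.1, fun hq => hB'.2 ?_⟩
        rcases hC.2 A hA B' hB'.1 with h | h
        · exact h hpA
        · exact absurd (h hq) hqA
      · intro hsub
        have : A ∈ C.filter (fun A => p ∉ A) := hsub (Finset.mem_filter.2 ⟨hA, hqA⟩)
        exact (Finset.mem_filter.1 this).2 hpA
    show (lv C p : ℝ) < (lv C q : ℝ)
    exact_mod_cast hlt

lemma lv_lt_of_mem_fullChain {C : Finset (Finset (Fin n))} {j : ℕ} {p : Fin n}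
    (h : p ∈ fullChain C j) : lv C p < j := mem_fullChain.1 h

lemma Kset_mem_quot {B C : Finset (Finset (Fin n))} (hB : IsBuildingSet n B)
    {I : Finset (Fin n)} (hI : I ∈ B) : Kset C I ∈ quotientBS B C := by
  obtain ⟨m, hm, hmax⟩ := Finset.exists_max_image I (lv C) (hB.1 I hI)
  set j := lv C m with hj
  refine mem_quotientBS.2 ⟨j, Nat.lt_succ_of_le (lv_le_card C m), mem_bsMinor.2 ⟨?_, ?_, ?_⟩⟩
  · intro i hi
    rw [mem_Kset] at hi
    exact mem_block.2 (le_antisymm (hmax i hi.1) (hi.2 m hm))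
  · exact ⟨m, mem_Kset.2 ⟨hm, hmax⟩⟩
  · refine ⟨I \ Kset C I, ?_, ?_⟩
    · intro p hp
      rw [Finset.mem_sdiff] at hp
      have := hp.2
      rw [mem_Kset, not_and] at this
      have h2 := this hp.1
      push_neg at h2
      obtain ⟨i', hi', hlt⟩ := h2
      exact mem_fullChain.2 (lt_of_lt_of_le hlt (hmax i' hi'))
    · have : Kset C I ∪ (I \ Kset C I) = I := by
        ext i
        simp only [Finset.mem_union, Finset.mem_sdiff, mem_Kset]
        constructor
        · rintro (h | h)
          · exact h.1
          · exact h.1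
        · intro h
          by_cases hK : i ∈ Kset C I
          · exact Or.inl (mem_Kset.1 hK)
          · exact Or.inr ⟨h, fun hc => hK (mem_Kset.2 hc)⟩
      rwa [this]

lemma quot_is_Kset {B C : Finset (Finset (Fin n))} {K : Finset (Fin n)}
    (hK : K ∈ quotientBS B C) : ∃ I ∈ B, Kset C I = K := by
  obtain ⟨j, _, hK'⟩ := mem_quotientBS.1 hK
  obtain ⟨hsub, hne, S', hS', hSB⟩ := mem_bsMinor.1 hK'
  obtain ⟨k₀, hk₀⟩ := hne
  refine ⟨K ∪ S', hSB, ?_⟩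
  have hlvK : ∀ p ∈ K, lv C p = j := fun p hp => mem_block.1 (hsub hp)
  have hlvS : ∀ p ∈ S', lv C p < j := fun p hp => lv_lt_of_mem_fullChain (hS' hp)
  ext i
  rw [mem_Kset]
  constructor
  · rintro ⟨hi, hmax⟩
    rcases Finset.mem_union.1 hi with h | h
    · exact h
    · exfalso
      have h1 : lv C i < j := hlvS i h
      have h2 : lv C k₀ ≤ lv C i := hmax k₀ (Finset.mem_union_left _ hk₀)
      rw [hlvK k₀ hk₀] at h2
      omega
  · intro hi
    refine ⟨Finset.mem_union_left _ hi, fun i' hi' => ?_⟩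
    rw [hlvK i hi]
    rcases Finset.mem_union.1 hi' with h | h
    · exact (hlvK i' h).le
    · exact (hlvS i' h).le

end Geo2
section Geo3

variable {n : ℕ}

lemma finite_setSum {ι : Type*} (s : Finset ι) (f : ι → Set (Fin n → ℝ)) :
    (∀ i ∈ s, (f i).Finite) → (∑ i ∈ s, f i).Finite := by
  classical
  induction s using Finset.induction_on with
  | empty => intro _; simpa using Set.finite_zero
  | @insert a s ha ih =>
    intro h
    rw [Finset.sum_insert ha]
    exact Set.Finite.add (h a (Finset.mem_insert_self a s))
      (ih fun i hi => h i (Finset.mem_insert_of_mem hi))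

lemma argmaxSet_convexHull_set (S : Set (Fin n → ℝ)) (hfin : S.Finite) (hne : S.Nonempty)
    (ω : Fin n → ℝ) :
    argmaxSet (convexHull ℝ S) ω = convexHull ℝ {v | v ∈ S ∧ ∀ w ∈ S, dotp ω w ≤ dotp ω v} := by
  classical
  obtain ⟨s, rfl⟩ : ∃ s : Finset (Fin n → ℝ), (↑s : Set (Fin n → ℝ)) = S :=
    ⟨hfin.toFinset, hfin.coe_toFinset⟩
  rw [argmaxSet_convexHull s (Finset.coe_nonempty.1 hne) ω]
  congr 1
  ext v
  simp [Finset.coe_filter]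

lemma argmax_nestoh (B C : Finset (Finset (Fin n))) (hB : IsBuildingSet n B)
    (hBne : B.Nonempty) :
    argmaxSet (nestoh B) (wlv C) =
      convexHull ℝ (∑ I ∈ B, (fun i => (Pi.single i 1 : Fin n → ℝ)) '' ↑(Kset C I)) := by
  classical
  set e : Fin n → (Fin n → ℝ) := fun i => Pi.single i 1 with he
  set ω := wlv C with hω
  have hωe : ∀ i : Fin n, dotp ω (e i) = (lv C i : ℝ) := fun i => dotp_single ω i
  have hnest : nestoh B = convexHull ℝ (∑ I ∈ B, e '' ↑I) := by
    rw [nestoh]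
    simp only [simplexFace]
    rw [← convexHull_sum]
  set S := ∑ I ∈ B, e '' (↑I : Set (Fin n)) with hS
  set SK := ∑ I ∈ B, e '' (↑(Kset C I) : Set (Fin n)) with hSK
  have hSfin : S.Finite :=
    finite_setSum B _ (fun I _ => (I.finite_toSet).image e)
  have hKne : ∀ I ∈ B, (Kset C I).Nonempty := fun I hI => Kset_nonempty (hB.1 I hI)
  set g₀ : Finset (Fin n) → (Fin n → ℝ) :=
    fun I => if h : (Kset C I).Nonempty then e h.choose else 0 with hg₀
  have hg₀K : ∀ I ∈ B, ∃ k ∈ Kset C I, g₀ I = e k := by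
    intro I hI
    rw [hg₀]
    simp only [dif_pos (hKne I hI)]
    exact ⟨(hKne I hI).choose, (hKne I hI).choose_spec, rfl⟩
  set m : Finset (Fin n) → ℝ := fun I => dotp ω (g₀ I) with hm
  have key1 : ∀ I ∈ B, ∀ i ∈ I, dotp ω (e i) ≤ m I := by
    intro I hI i hi
    obtain ⟨k, hk, hgk⟩ := hg₀K I hI
    show dotp ω (e i) ≤ dotp ω (g₀ I)
    rw [hgk, hωe, hωe]
    exact_mod_cast (mem_Kset.1 hk).2 i hi
  have key2 : ∀ I ∈ B, ∀ i ∈ Kset C I, dotp ω (e i) = m I := by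
    intro I hI i hi
    obtain ⟨k, hk, hgk⟩ := hg₀K I hI
    show dotp ω (e i) = dotp ω (g₀ I)
    rw [hgk, hωe, hωe]
    have h1 := (mem_Kset.1 hk).2 i (mem_Kset.1 hi).1
    have h2 := (mem_Kset.1 hi).2 k (mem_Kset.1 hk).1
    exact_mod_cast le_antisymm h1 h2
  have key3 : ∀ I ∈ B, ∀ i ∈ I, dotp ω (e i) = m I → i ∈ Kset C I := by
    intro I hI i hi heq
    obtain ⟨k, hk, hgk⟩ := hg₀K I hI
    have heq' : dotp ω (e i) = dotp ω (g₀ I) := heq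
    rw [hgk, hωe, hωe] at heq'
    have : lv C i = lv C k := Nat.cast_injective heq'
    refine mem_Kset.2 ⟨hi, fun i' hi' => ?_⟩
    rw [this]
    exact (mem_Kset.1 hk).2 i' hi'
  set M : ℝ := ∑ I ∈ B, m I with hM
  have hub : ∀ v ∈ S, dotp ω v ≤ M := by
    intro v hv
    obtain ⟨g, hg, rfl⟩ := (Set.mem_finset_sum B _ v).1 hv
    rw [dotp_finsum, hM]
    apply Finset.sum_le_sum
    intro I hI
    obtain ⟨i, hi, hei⟩ := hg hI
    rw [← hei]
    exact key1 I hI i hi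
  have hSKS : ∀ v ∈ SK, v ∈ S := by
    intro v hv
    obtain ⟨g, hg, rfl⟩ := (Set.mem_finset_sum B _ v).1 hv
    refine (Set.mem_finset_sum B _ _).2 ⟨g, fun {I} hI => ?_, rfl⟩
    obtain ⟨i, hi, hei⟩ := hg hI
    exact ⟨i, (mem_Kset.1 hi).1, hei⟩
  have hSKM : ∀ v ∈ SK, dotp ω v = M := by
    intro v hv
    obtain ⟨g, hg, rfl⟩ := (Set.mem_finset_sum B _ v).1 hv
    rw [dotp_finsum, hM]
    apply Finset.sum_congr rfl
    intro I hI
    obtain ⟨i, hi, hei⟩ := hg hI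
    rw [← hei]
    exact key2 I hI i hi
  have hconv : ∀ v ∈ S, dotp ω v = M → v ∈ SK := by
    intro v hv hvM
    obtain ⟨g, hg, rfl⟩ := (Set.mem_finset_sum B _ v).1 hv
    rw [dotp_finsum, hM] at hvM
    have hle : ∀ I ∈ B, dotp ω (g I) ≤ m I := by
      intro I hI
      obtain ⟨i, hi, hei⟩ := hg hI
      rw [← hei]; exact key1 I hI i hi
    have heach := (Finset.sum_eq_sum_iff_of_le hle).1 hvM
    refine (Set.mem_finset_sum B _ _).2 ⟨g, fun {I} hI => ?_, rfl⟩
    obtain ⟨i, hi, hei⟩ := hg hI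
    refine ⟨i, ?_, hei⟩
    have : dotp ω (e i) = m I := by rw [hei]; exact heach I hI
    exact key3 I hI i hi this
  have hSKne : SK.Nonempty := by
    refine ⟨∑ I ∈ B, g₀ I, (Set.mem_finset_sum B _ _).2 ⟨g₀, fun {I} hI => ?_, rfl⟩⟩
    obtain ⟨k, hk, hgk⟩ := hg₀K I hI
    exact ⟨k, hk, hgk.symm⟩
  obtain ⟨z₀, hz₀⟩ := hSKne
  have hSne : S.Nonempty := ⟨z₀, hSKS z₀ hz₀⟩
  rw [hnest, argmaxSet_convexHull_set S hSfin hSne ω]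
  congr 1
  ext v
  constructor
  · rintro ⟨hvS, hvmax⟩
    have h1 : dotp ω v ≤ M := hub v hvS
    have h2 : M ≤ dotp ω v := by
      rw [← hSKM z₀ hz₀]
      exact hvmax z₀ (hSKS z₀ hz₀)
    exact hconv v hvS (le_antisymm h1 h2)
  · intro hv
    refine ⟨hSKS v hv, fun w hw => ?_⟩
    rw [hSKM v hv]
    exact hub w hw

end Geo3
section Geo4

variable {n : ℕ}

/-- Generators of the direction space of the face. -/
def gens (B C : Finset (Finset (Fin n))) : Set (Fin n → ℝ) :=
  {x | ∃ K ∈ quotientBS B C, ∃ i ∈ K, ∃ j ∈ K,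
    x = (Pi.single i 1 : Fin n → ℝ) - Pi.single j 1}

lemma vectorSpan_SK (B C : Finset (Finset (Fin n))) (hB : IsBuildingSet n B) :
    vectorSpan ℝ (∑ I ∈ B, (fun i => (Pi.single i 1 : Fin n → ℝ)) '' ↑(Kset C I)) =
      Submodule.span ℝ (gens B C) := by
  classical
  set e : Fin n → (Fin n → ℝ) := fun i => Pi.single i 1 with he
  set SK := ∑ I ∈ B, e '' (↑(Kset C I) : Set (Fin n)) with hSK
  have hKne : ∀ I ∈ B, (Kset C I).Nonempty := fun I hI => Kset_nonempty (hB.1 I hI)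
  apply le_antisymm
  · rw [vectorSpan_def, Submodule.span_le]
    intro x hx
    obtain ⟨a, ha, b, hb, rfl⟩ := Set.mem_vsub.1 hx
    obtain ⟨g, hg, rfl⟩ := (Set.mem_finset_sum B _ a).1 ha
    obtain ⟨g', hg', rfl⟩ := (Set.mem_finset_sum B _ b).1 hb
    have : (∑ I ∈ B, g I) -ᵥ (∑ I ∈ B, g' I) = ∑ I ∈ B, (g I - g' I) := by
      rw [vsub_eq_sub, Finset.sum_sub_distrib]
    rw [this]
    apply Submodule.sum_mem
    intro I hI
    obtain ⟨i, hi, hei⟩ := hg hI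
    obtain ⟨i', hi', hei'⟩ := hg' hI
    apply Submodule.subset_span
    exact ⟨Kset C I, Kset_mem_quot hB hI, i, hi, i', hi', by rw [← hei, ← hei']⟩
  · rw [Submodule.span_le]
    rintro x ⟨K, hK, i, hi, j, hj, rfl⟩
    obtain ⟨I₀, hI₀, hKI⟩ := quot_is_Kset hK
    set g₀ : Finset (Fin n) → (Fin n → ℝ) :=
      fun I => if h : (Kset C I).Nonempty then e h.choose else 0 with hg₀
    have hg₀K : ∀ I ∈ B, g₀ I ∈ e '' (↑(Kset C I) : Set (Fin n)) := by
      intro I hI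
      rw [hg₀]
      simp only [dif_pos (hKne I hI)]
      exact ⟨(hKne I hI).choose, (hKne I hI).choose_spec, rfl⟩
    set r : Fin n → ℝ := 0
    have hrest : (∑ I ∈ B.erase I₀, g₀ I) ∈ ∑ I ∈ B.erase I₀, e '' (↑(Kset C I) : Set (Fin n)) := by
      refine (Set.mem_finset_sum _ _ _).2 ⟨g₀, fun {I} hI => ?_, rfl⟩
      exact hg₀K I (Finset.mem_of_mem_erase hI)
    have hmem : ∀ p ∈ K, (e p + ∑ I ∈ B.erase I₀, g₀ I) ∈ SK := by
      intro p hp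
      rw [hSK, ← Finset.add_sum_erase B _ hI₀]
      exact Set.add_mem_add ⟨p, by rw [hKI]; exact_mod_cast hp, rfl⟩ hrest
    have hvs : e i - e j ∈ SK -ᵥ SK := by
      rw [Set.mem_vsub]
      refine ⟨e i + ∑ I ∈ B.erase I₀, g₀ I, hmem i hi,
        e j + ∑ I ∈ B.erase I₀, g₀ I, hmem j hj, ?_⟩
      rw [vsub_eq_sub]
      abel
    rw [vectorSpan_def]
    exact Submodule.subset_span hvs

end Geo4
section Geo5

variable {n : ℕ}

lemma finrank_span_gens (hn : 0 < n) (B C : Finset (Finset (Fin n)))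
    (hB : IsBuildingSet n B) :
    Module.finrank ℝ (Submodule.span ℝ (gens B C)) = n - cComp (quotientBS B C) := by
  classical
  set e : Fin n → (Fin n → ℝ) := fun i => Pi.single i 1 with he
  set Mx := (quotientBS B C).filter (fun I => ∀ J ∈ quotientBS B C, I ⊆ J → I = J) with hMx
  have hcov : ∀ i : Fin n, ∃ T ∈ Mx, i ∈ T := by
    intro i
    obtain ⟨T, hT, hsub⟩ := exists_maximal_quot (singleton_mem_quot (C := C) hB i)
    exact ⟨T, hT, hsub (Finset.mem_singleton_self i)⟩
  have huniq : ∀ T ∈ Mx, ∀ T' ∈ Mx, ∀ i : Fin n, i ∈ T → i ∈ T' → T = T' := by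
    intro T hT T' hT' i hiT hiT'
    have h1 : T ⊆ T' := subset_of_maximal_inter hB (Finset.mem_filter.1 hT).1 hT'
      ⟨i, Finset.mem_inter.2 ⟨hiT, hiT'⟩⟩
    have h2 : T' ⊆ T := subset_of_maximal_inter hB (Finset.mem_filter.1 hT').1 hT
      ⟨i, Finset.mem_inter.2 ⟨hiT', hiT⟩⟩
    exact le_antisymm h1 h2
  have hsubK : ∀ K ∈ quotientBS B C, ∀ T ∈ Mx, ∀ i : Fin n, i ∈ K → i ∈ T → K ⊆ T :=
    fun K hK T hT i hiK hiT =>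
      subset_of_maximal_inter hB hK hT ⟨i, Finset.mem_inter.2 ⟨hiK, hiT⟩⟩
  set part : Fin n → Finset (Fin n) := fun i => (hcov i).choose with hpart
  have hpartMx : ∀ i, part i ∈ Mx := fun i => (hcov i).choose_spec.1
  have hpartmem : ∀ i, i ∈ part i := fun i => (hcov i).choose_spec.2
  have hpart_eq : ∀ (i : Fin n) (T : Finset (Fin n)), T ∈ Mx → i ∈ T → part i = T :=
    fun i T hT hiT => huniq _ (hpartMx i) _ hT i (hpartmem i) hiT
  set rep : Finset (Fin n) → Fin n :=
    fun T => if h : T.Nonempty then h.choose else ⟨0, hn⟩ with hrep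
  have hrepT : ∀ T : Finset (Fin n), T.Nonempty → rep T ∈ T := by
    intro T hT
    rw [hrep]
    simp only [dif_pos hT]
    exact hT.choose_spec
  -- the linear map recording sums of coordinates over the maximal parts
  set φ : (Fin n → ℝ) →ₗ[ℝ] ({T // T ∈ Mx} → ℝ) :=
    LinearMap.pi (fun T => ∑ p ∈ (T : Finset (Fin n)), LinearMap.proj p) with hφdef
  have hφ : ∀ (x : Fin n → ℝ) (T : {T // T ∈ Mx}), φ x T = ∑ p ∈ (T : Finset (Fin n)), x p := by
    intro x T
    rw [hφdef]
    simp [LinearMap.pi_apply, LinearMap.sum_apply, LinearMap.proj_apply]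
  have hφe : ∀ (a : Fin n) (T : {T // T ∈ Mx}),
      φ (e a) T = if a ∈ (T : Finset (Fin n)) then (1 : ℝ) else 0 := by
    intro a T
    rw [hφ, he]
    simp only [Pi.single_apply]
    exact Finset.sum_ite_eq' _ a (fun _ => (1 : ℝ))
  have hTne : ∀ T : Finset (Fin n), T ∈ Mx → T.Nonempty :=
    fun T hT => quot_nonempty (Finset.mem_filter.1 hT).1
  -- span of generators equals kernel of φ
  have hker1 : Submodule.span ℝ (gens B C) ≤ LinearMap.ker φ := by
    rw [Submodule.span_le]
    rintro x ⟨K, hK, i, hi, j, hj, rfl⟩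
    rw [SetLike.mem_coe, LinearMap.mem_ker, map_sub]
    funext T
    rw [Pi.sub_apply, Pi.zero_apply, hφe, hφe]
    have hiff : (i ∈ (T : Finset (Fin n))) ↔ (j ∈ (T : Finset (Fin n))) := by
      constructor
      · intro h; exact hsubK K hK T T.2 i hi h hj
      · intro h; exact hsubK K hK T T.2 j hj h hi
    by_cases h : i ∈ (T : Finset (Fin n))
    · rw [if_pos h, if_pos (hiff.1 h)]; ring
    · rw [if_neg h, if_neg (fun hc => h (hiff.2 hc))]; ring
  have hgen_mem : ∀ i : Fin n, (e i - e (rep (part i))) ∈ gens B C := by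
    intro i
    exact ⟨part i, (Finset.mem_filter.1 (hpartMx i)).1, i, hpartmem i,
      rep (part i), hrepT _ ⟨i, hpartmem i⟩, rfl⟩
  have hdisjMx : ∀ T ∈ Mx, ∀ T' ∈ Mx, T ≠ T' → Disjoint (id T) (id T') := by
    intro T hT T' hT' hne
    rw [Finset.disjoint_left]
    intro p hp hp'
    exact hne (huniq T hT T' hT' p hp hp')
  have hbi : (Finset.univ : Finset (Fin n)) = Mx.biUnion id := by
    ext i
    simp only [Finset.mem_univ, true_iff, Finset.mem_biUnion, id]
    exact hcov i
  have hker2 : LinearMap.ker φ ≤ Submodule.span ℝ (gens B C) := by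
    intro x hx
    rw [LinearMap.mem_ker] at hx
    have hxT : ∀ T : {T // T ∈ Mx}, ∑ p ∈ (T : Finset (Fin n)), x p = 0 := by
      intro T
      rw [← hφ, hx, Pi.zero_apply]
    have h1 : ∑ i : Fin n, x i • e i = x := by
      have : ∀ i : Fin n, x i • e i = Pi.single i (x i) := by
        intro i
        rw [he]
        ext p
        simp [Pi.single_apply, mul_comm]
      simp_rw [this]
      exact Finset.univ_sum_single x
    have h2 : ∑ i : Fin n, x i • e (rep (part i)) = 0 := by
      rw [hbi, Finset.sum_biUnion hdisjMx]
      apply Finset.sum_eq_zero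
      intro T hT
      have : ∀ i ∈ id T, x i • e (rep (part i)) = x i • e (rep T) := by
        intro i hi
        rw [hpart_eq i T hT hi]
      rw [Finset.sum_congr rfl this, ← Finset.sum_smul]
      rw [show (id T : Finset (Fin n)) = ((⟨T, hT⟩ : {T // T ∈ Mx}) : Finset (Fin n)) from rfl]
      rw [hxT ⟨T, hT⟩, zero_smul]
    have hxsum : x = ∑ i : Fin n, x i • (e i - e (rep (part i))) := by
      have : ∑ i : Fin n, x i • (e i - e (rep (part i))) =
          (∑ i : Fin n, x i • e i) - ∑ i : Fin n, x i • e (rep (part i)) := by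
        rw [← Finset.sum_sub_distrib]
        apply Finset.sum_congr rfl
        intro i _
        rw [smul_sub]
      rw [this, h1, h2, sub_zero]
    rw [hxsum]
    exact Submodule.sum_mem _ (fun i _ =>
      Submodule.smul_mem _ _ (Submodule.subset_span (hgen_mem i)))
  have hkereq : Submodule.span ℝ (gens B C) = LinearMap.ker φ := le_antisymm hker1 hker2
  -- φ is surjective
  have hsurj : Function.Surjective φ := by
    intro y
    refine ⟨∑ T : {T // T ∈ Mx}, y T • e (rep (T : Finset (Fin n))), ?_⟩
    rw [map_sum]
    funext T'
    rw [Finset.sum_apply]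
    have hterm : ∀ T : {T // T ∈ Mx},
        (φ (y T • e (rep (T : Finset (Fin n))))) T' = if T = T' then y T else 0 := by
      intro T
      rw [map_smul, Pi.smul_apply, hφe, smul_eq_mul]
      have hiff : (rep (T : Finset (Fin n)) ∈ (T' : Finset (Fin n))) ↔ T = T' := by
        constructor
        · intro h
          exact Subtype.ext (huniq _ T.2 _ T'.2 _ (hrepT _ (hTne _ T.2)) h)
        · rintro rfl
          exact hrepT _ (hTne _ T.2)
      by_cases h : T = T'
      · rw [if_pos (hiff.2 h), if_pos h]; ring
      · rw [if_neg (fun hc => h (hiff.1 hc)), if_neg h]; ring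
    rw [Finset.sum_congr rfl (fun T _ => hterm T)]
    rw [Finset.sum_ite_eq' Finset.univ T' y]
    simp
  -- rank-nullity
  have hrank := LinearMap.finrank_range_add_finrank_ker φ
  rw [LinearMap.range_eq_top.2 hsurj, finrank_top] at hrank
  have hd1 : Module.finrank ℝ ({T // T ∈ Mx} → ℝ) = Mx.card := by
    rw [Module.finrank_fintype_fun_eq_card, Fintype.card_coe]
  have hd2 : Module.finrank ℝ (Fin n → ℝ) = n := by
    rw [Module.finrank_fintype_fun_eq_card, Fintype.card_fin]
  have hM : cComp (quotientBS B C) = Mx.card := rfl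
  rw [hkereq, hM]
  omega

end Geo5

/-- For a connected building set `B` on `[n]` and any flag `L` of subsets of
`[n]`, the `P_B`-rank of `L` (the dimension of the face `π_{P_B}(L)` of the nestohedron) equals
the rank of `L` according to `B`, and both equal `n - c(B/L)`:
`rk_{P_B}(L) = rk_B(L) = n - c(B/L)`. -/
theorem nestohedron_rank_eq_rkB (n : ℕ) (hn : 0 < n)
    (B : Finset (Finset (Fin n))) (hB : IsBuildingSet n B) (hconn : Finset.univ ∈ B)
    (C : Finset (Finset (Fin n))) (hC : IsFlag n C)
    (G : Set (Fin n → ℝ)) (hGface : IsFace (nestoh B) G)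
    (hG : ∀ ω ∈ relintBraidCone C, argmaxSet (nestoh B) ω = G) :
    pdim G = rkB B C ∧ rkB B C = n - cComp (quotientBS B C) := by
  have hBne : B.Nonempty := ⟨Finset.univ, hconn⟩
  have hA : rkB B C = n - cComp (quotientBS B C) := partA B hB C
  refine ⟨?_, hA⟩
  have hGeq : G = convexHull ℝ
      (∑ I ∈ B, (fun i => (Pi.single i 1 : Fin n → ℝ)) '' ↑(Kset C I)) := by
    rw [← hG (wlv C) (wlv_mem_relint hC), argmax_nestoh B C hB hBne]
  rw [pdim, hGeq, ← direction_affineSpan, affineSpan_convexHull, direction_affineSpan,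
    vectorSpan_SK B C hB, finrank_span_gens hn B C hB, hA]
end
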